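/- Let μ be the probability measure on K = (0,1)³ × {0,1} with density (6/π²)·𝟙{0<B<1−A}·𝟙{0<Q<1/(2−A−B)}/(1−A) dA dB dQ times counting measure on N, and for h' ∈ (−1,1) let P(·,·|h') be the pushforward of μ under (A,B,Q,N) ↦ 𝐓_{A,B,Q,N}(h'). Then for every h' ∈ (−1,1), P(·,·|h') is a probability measure on ℝ₊ × [−1,1], and P(·,·|−h') is the image of P(·,·|h') under the map (s,h) ↦ (s,−h). -/

import Mathlib

open Set

/-- The three-branch limiting transfer map `𝐓_{A,B,Q,N}` of the periodic Lorentz gas,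
for impact parameters `h' ∈ [−1,1]`, with `Q' = (1 − Q(1−B))/(1−A)`. -/
noncomputable def transferMap (A B Q : ℝ) (N : ℕ) (h' : ℝ) : ℝ × ℝ :=
  if (-1:ℝ)^N * h' > 1 - 2*A then
    (Q, h' - 2*(-1:ℝ)^N*(1 - A))
  else if (-1:ℝ)^N * h' < -1 + 2*B then
    ((1 - Q*(1 - B))/(1 - A), h' + 2*(-1:ℝ)^N*(1 - B))
  else
    ((1 - Q*(1 - B))/(1 - A) + Q, h' + 2*(-1:ℝ)^N*(A - B))

open MeasureTheory

/-- The limiting parameter measure `μ` on `K = (0,1)³ × {0,1}` (`{0,1}` encoded as `Bool`),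
with density `(6/π²)·𝟙{0<A<1}·𝟙{0<B<1−A}·𝟙{0<Q<1/(2−A−B)}/(1−A)` with respect to
`dA dB dQ` times counting measure on `N`. -/
noncomputable def lorentzMu : Measure ((ℝ × ℝ × ℝ) × Bool) :=
  ((volume : Measure (ℝ × ℝ × ℝ)).withDensity fun p =>
    ENNReal.ofReal
      (if 0 < p.1 ∧ p.1 < 1 ∧ 0 < p.2.1 ∧ p.2.1 < 1 - p.1 ∧
          0 < p.2.2 ∧ p.2.2 < 1/(2 - p.1 - p.2.1) then
        (6 / Real.pi ^ 2) / (1 - p.1) else 0)).prod (Measure.count : Measure Bool)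

/-- The transition probability `P(·,·|h')`: the pushforward of `μ` under
`(A,B,Q,N) ↦ 𝐓_{A,B,Q,N}(h')`. -/
noncomputable def transitionProb (h' : ℝ) : Measure (ℝ × ℝ) :=
  lorentzMu.map fun p => transferMap p.1.1 p.1.2.1 p.1.2.2 p.2.toNat h'


/-! ### Auxiliary lemmas -/

open scoped ENNReal NNReal

section LGAux

/-- The alternating Basel-type sums. -/
lemma LG_hasSum_one : HasSum (fun n : ℕ => (1:ℝ) / ((n:ℝ)+1)^2) (Real.pi^2/6) := by
  have h3 : HasSum (fun n : ℕ => (1:ℝ) / ((n+1:ℕ):ℝ)^2) (Real.pi^2/6) := by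
    apply (hasSum_nat_add_iff (f := fun n : ℕ => (1:ℝ) / (n:ℝ)^2) 1).2
    simpa using hasSum_zeta_two
  convert h3 using 2 with n
  push_cast
  ring

lemma LG_hasSum_odd : HasSum (fun k : ℕ => (1:ℝ) / (2*(k:ℝ)+2)^2) (Real.pi^2/24) := by
  have h := LG_hasSum_one.mul_left (1/4)
  have : (1/4) * (Real.pi^2/6) = Real.pi^2/24 := by ring
  rw [this] at h
  convert h using 1
  rfl
  funext k
  field_simp
  ring

lemma LG_summable_even : Summable (fun k : ℕ => (1:ℝ) / (2*(k:ℝ)+1)^2) := by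
  have hle : ∀ k : ℕ, (1:ℝ) / (2*(k:ℝ)+1)^2 ≤ (1:ℝ)/((k:ℝ)+1)^2 := by
    intro k
    have h1 : (0:ℝ) < ((k:ℝ)+1)^2 := by positivity
    have h2 : ((k:ℝ)+1)^2 ≤ (2*(k:ℝ)+1)^2 := by nlinarith [Nat.cast_nonneg (α := ℝ) k]
    exact div_le_div_of_nonneg_left (by norm_num) h1 h2
  exact Summable.of_nonneg_of_le (fun k => by positivity) hle LG_hasSum_one.summable

lemma LG_hasSum_even : HasSum (fun k : ℕ => (1:ℝ) / (2*(k:ℝ)+1)^2) (Real.pi^2/8) := by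
  have hE := LG_summable_even.hasSum
  have hcomb : HasSum (fun n : ℕ => (1:ℝ)/((n:ℝ)+1)^2)
      ((∑' k : ℕ, (1:ℝ)/(2*(k:ℝ)+1)^2) + Real.pi^2/24) := by
    apply HasSum.even_add_odd
    · convert hE using 2 with k; push_cast; ring
    · convert LG_hasSum_odd using 2 with k; push_cast; ring
  have h2 := hcomb.unique LG_hasSum_one
  have hval : (∑' k : ℕ, (1:ℝ)/(2*(k:ℝ)+1)^2) = Real.pi^2/8 := by linarith
  rwa [hval] at hE

lemma LG_hasSum_alt : HasSum (fun n : ℕ => (-1:ℝ)^n / ((n:ℝ)+1)^2) (Real.pi^2/12) := by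
  have h : HasSum (fun n : ℕ => (-1:ℝ)^n / ((n:ℝ)+1)^2) (Real.pi^2/8 + -(Real.pi^2/24)) := by
    apply HasSum.even_add_odd
    · convert LG_hasSum_even using 2 with k
      rw [pow_mul]
      push_cast; norm_num
    · convert LG_hasSum_odd.neg using 1
      rfl
      funext k
      rw [pow_succ, pow_mul]
      push_cast; norm_num; ring
  convert h using 1; ring

/-- Power series of `log(1+u)/u`. -/
lemma LG_hasSum_log (u : ℝ) (hu : u ∈ Ioo (0:ℝ) 1) :
    HasSum (fun n : ℕ => (-1:ℝ)^n * u^n / ((n:ℝ)+1)) (Real.log (1+u) / u) := by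
  obtain ⟨h0, h1⟩ := hu
  have habs : |(-u)| < 1 := by rw [abs_neg, abs_of_pos h0]; exact h1
  have h := (Real.hasSum_pow_div_log_of_abs_lt_one habs).neg.div_const u
  have heq : (1 : ℝ) - -u = 1 + u := by ring
  rw [heq] at h
  convert h using 1
  · rfl
  · funext n
    have hu0 : u ≠ 0 := ne_of_gt h0
    rw [neg_pow]
    field_simp
    ring
  · rw [neg_neg]

lemma LG_integral_pow (n : ℕ) : ∫ u in Ioo (0:ℝ) 1, u^n = 1/((n:ℝ)+1) := by
  rw [← integral_Ioc_eq_integral_Ioo, ← intervalIntegral.integral_of_le zero_le_one,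
    integral_pow]
  simp

lemma LG_integral_term (n : ℕ) :
    ∫ u in Ioo (0:ℝ) 1, (-1:ℝ)^n * u^n / ((n:ℝ)+1) = (-1:ℝ)^n / ((n:ℝ)+1)^2 := by
  have h : ∀ u : ℝ, (-1:ℝ)^n * u^n / ((n:ℝ)+1) = ((-1:ℝ)^n / ((n:ℝ)+1)) * u^n := by
    intro u; ring
  simp_rw [h]
  rw [integral_const_mul, LG_integral_pow]
  have hn : ((n:ℝ)+1) ≠ 0 := by positivity
  field_simp

lemma LG_integrableOn_pow (n : ℕ) :
    IntegrableOn (fun u : ℝ => u^n / ((n:ℝ)+1)) (Ioo (0:ℝ) 1) := by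
  apply (ContinuousOn.integrableOn_Icc (a := (0:ℝ)) (b := 1) ?_).mono_set Ioo_subset_Icc_self
  fun_prop

lemma LG_lintegral_norm_term (n : ℕ) :
    ∫⁻ u in Ioo (0:ℝ) 1, ‖(-1:ℝ)^n * u^n / ((n:ℝ)+1)‖₊ = ENNReal.ofReal (1/((n:ℝ)+1)^2) := by
  have hcong : ∀ᵐ u ∂(volume.restrict (Ioo (0:ℝ) 1)),
      (‖(-1:ℝ)^n * u^n / ((n:ℝ)+1)‖₊ : ℝ≥0∞) = ENNReal.ofReal (u^n / ((n:ℝ)+1)) := by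
    filter_upwards [ae_restrict_mem measurableSet_Ioo] with u hu
    rw [← enorm_eq_nnnorm, Real.enorm_eq_ofReal_abs]
    congr 1
    rw [abs_div, abs_mul, abs_pow, abs_pow, abs_neg, abs_one, one_pow, one_mul,
      abs_of_pos hu.1, abs_of_pos (by positivity : (0:ℝ) < (n:ℝ)+1)]
  rw [lintegral_congr_ae hcong, ← ofReal_integral_eq_lintegral_ofReal (LG_integrableOn_pow n)]
  · congr 1
    rw [integral_div, LG_integral_pow]
    have hn : ((n:ℝ)+1) ≠ 0 := by positivity
    field_simp
  · filter_upwards [ae_restrict_mem measurableSet_Ioo] with u hu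
    have : (0:ℝ) < u := hu.1
    positivity

/-- The dilogarithm integral. -/
lemma LG_integral_log_div : ∫ u in Ioo (0:ℝ) 1, Real.log (1+u) / u = Real.pi^2/12 := by
  have hmeas : ∀ n : ℕ, AEStronglyMeasurable (fun u : ℝ => (-1:ℝ)^n * u^n / ((n:ℝ)+1))
      (volume.restrict (Ioo (0:ℝ) 1)) := by
    intro n
    exact (Continuous.aestronglyMeasurable (by fun_prop))
  have hsum : ∑' n : ℕ, ∫⁻ u in Ioo (0:ℝ) 1, ‖(-1:ℝ)^n * u^n / ((n:ℝ)+1)‖₊ ≠ ⊤ := by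
    simp_rw [LG_lintegral_norm_term]
    rw [← ENNReal.ofReal_tsum_of_nonneg (fun n => by positivity) LG_hasSum_one.summable]
    exact ENNReal.ofReal_ne_top
  have hkey := MeasureTheory.integral_tsum hmeas hsum
  have hcong : ∫ u in Ioo (0:ℝ) 1, Real.log (1+u) / u
      = ∫ u in Ioo (0:ℝ) 1, ∑' n : ℕ, (-1:ℝ)^n * u^n / ((n:ℝ)+1) := by
    apply integral_congr_ae
    filter_upwards [ae_restrict_mem measurableSet_Ioo] with u hu
    exact ((LG_hasSum_log u hu).tsum_eq).symm
  rw [hcong, hkey]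
  simp_rw [LG_integral_term]
  exact LG_hasSum_alt.tsum_eq

lemma LG_integral_B {A : ℝ} (hA0 : 0 < A) (hA1 : A < 1) :
    ∫ B in Ioo (0:ℝ) (1-A), 1/(2-A-B) = Real.log (2-A) := by
  have h1A : (0:ℝ) ≤ 1 - A := by linarith
  rw [← integral_Ioc_eq_integral_Ioo, ← intervalIntegral.integral_of_le h1A]
  have hderiv : ∀ x ∈ uIcc (0:ℝ) (1-A),
      HasDerivAt (fun B => -Real.log (2-A-B)) (1/(2-A-x)) x := by
    intro x hx
    rw [uIcc_of_le h1A] at hx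
    have hpos : 0 < 2-A-x := by
      rcases hx with ⟨hx0, hx1⟩; linarith
    have h1 : HasDerivAt (fun B : ℝ => 2-A-B) (-1) x := by
      simpa using ((hasDerivAt_id x).const_sub (2-A))
    have h2 := (h1.log (ne_of_gt hpos)).neg
    rw [show (1:ℝ)/(2-A-x) = -(-1/(2-A-x)) by ring]
    exact h2
  have hint : IntervalIntegrable (fun B => 1/(2-A-B)) volume 0 (1-A) := by
    apply ContinuousOn.intervalIntegrable
    rw [uIcc_of_le h1A]
    apply ContinuousOn.div continuousOn_const (by fun_prop)
    intro x hx
    rcases hx with ⟨hx0, hx1⟩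
    intro h
    have : 0 < 2-A-x := by linarith
    linarith
  rw [intervalIntegral.integral_eq_sub_of_hasDerivAt hderiv hint]
  have : (2:ℝ)-A-(1-A) = 1 := by ring
  rw [this]
  simp

/-- The (real-valued) density of `lorentzMu`. -/
noncomputable def lorentzDensity (p : ℝ × ℝ × ℝ) : ℝ :=
  if 0 < p.1 ∧ p.1 < 1 ∧ 0 < p.2.1 ∧ p.2.1 < 1 - p.1 ∧
      0 < p.2.2 ∧ p.2.2 < 1/(2 - p.1 - p.2.1) then
    (6 / Real.pi ^ 2) / (1 - p.1) else 0

lemma LG_measurableSet_cond : MeasurableSet {p : ℝ × ℝ × ℝ | 0 < p.1 ∧ p.1 < 1 ∧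
    0 < p.2.1 ∧ p.2.1 < 1 - p.1 ∧ 0 < p.2.2 ∧ p.2.2 < 1/(2 - p.1 - p.2.1)} := by
  simp only [Set.setOf_and]
  refine MeasurableSet.inter ?_ (MeasurableSet.inter ?_ (MeasurableSet.inter ?_
    (MeasurableSet.inter ?_ (MeasurableSet.inter ?_ ?_)))) <;>
    exact measurableSet_lt (by fun_prop) (by fun_prop)

lemma LG_measurable_density : Measurable fun p => ENNReal.ofReal (lorentzDensity p) := by
  apply ENNReal.measurable_ofReal.comp
  have : lorentzDensity = ({p : ℝ × ℝ × ℝ | 0 < p.1 ∧ p.1 < 1 ∧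
      0 < p.2.1 ∧ p.2.1 < 1 - p.1 ∧ 0 < p.2.2 ∧ p.2.2 < 1/(2 - p.1 - p.2.1)}).indicator
      (fun p => (6 / Real.pi ^ 2) / (1 - p.1)) := by
    funext p
    simp only [lorentzDensity, Set.indicator_apply, Set.mem_setOf_eq]
  rw [this]
  exact Measurable.indicator (by fun_prop) LG_measurableSet_cond

lemma LG_c_nonneg {A : ℝ} (hA1 : A < 1) : 0 ≤ (6 / Real.pi ^ 2) / (1 - A) := by
  have h1 := Real.pi_ne_zero
  have h2 : (0:ℝ) < 1 - A := by linarith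
  positivity

lemma LG_lintegral_Q (A B : ℝ) :
    ∫⁻ Q, ENNReal.ofReal (lorentzDensity (A, B, Q))
      = if 0 < A ∧ A < 1 ∧ 0 < B ∧ B < 1 - A then
          ENNReal.ofReal ((6 / Real.pi ^ 2) / (1 - A) * (1/(2 - A - B))) else 0 := by
  by_cases hc : 0 < A ∧ A < 1 ∧ 0 < B ∧ B < 1 - A
  · obtain ⟨hA0, hA1, hB0, hB1⟩ := hc
    rw [if_pos ⟨hA0, hA1, hB0, hB1⟩]
    have h2AB : (0:ℝ) < 2 - A - B := by linarith
    have hr : (0:ℝ) < 1/(2-A-B) := by positivity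
    have heq : (fun Q => ENNReal.ofReal (lorentzDensity (A, B, Q)))
        = (Ioo (0:ℝ) (1/(2-A-B))).indicator
            (fun _ => ENNReal.ofReal ((6 / Real.pi ^ 2) / (1 - A))) := by
      funext Q
      unfold lorentzDensity
      by_cases hQ : Q ∈ Ioo (0:ℝ) (1/(2-A-B))
      · rw [indicator_of_mem hQ, if_pos ⟨hA0, hA1, hB0, hB1, hQ.1, hQ.2⟩]
      · rw [indicator_of_notMem hQ, if_neg]
        · simp
        · rintro ⟨_, _, _, _, hQ0, hQr⟩
          exact hQ ⟨hQ0, hQr⟩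
    rw [heq, lintegral_indicator measurableSet_Ioo, setLIntegral_const, Real.volume_Ioo,
      sub_zero, ← ENNReal.ofReal_mul (LG_c_nonneg hA1)]
  · rw [if_neg hc]
    have heq : ∀ Q : ℝ, lorentzDensity (A, B, Q) = 0 := by
      intro Q
      unfold lorentzDensity
      rw [if_neg]
      rintro ⟨h1, h2, h3, h4, _, _⟩
      exact hc ⟨h1, h2, h3, h4⟩
    simp [heq]

lemma LG_lintegral_B (A : ℝ) :
    ∫⁻ B, (if 0 < A ∧ A < 1 ∧ 0 < B ∧ B < 1 - A then
          ENNReal.ofReal ((6 / Real.pi ^ 2) / (1 - A) * (1/(2 - A - B))) else 0)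
      = if 0 < A ∧ A < 1 then
          ENNReal.ofReal ((6 / Real.pi ^ 2) / (1 - A) * Real.log (2 - A)) else 0 := by
  by_cases hA : 0 < A ∧ A < 1
  · obtain ⟨hA0, hA1⟩ := hA
    rw [if_pos ⟨hA0, hA1⟩]
    have heq : (fun B => if 0 < A ∧ A < 1 ∧ 0 < B ∧ B < 1 - A then
          ENNReal.ofReal ((6 / Real.pi ^ 2) / (1 - A) * (1/(2 - A - B))) else 0)
        = (Ioo (0:ℝ) (1-A)).indicator
            (fun B => ENNReal.ofReal ((6 / Real.pi ^ 2) / (1 - A) * (1/(2 - A - B)))) := by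
      funext B
      by_cases hB : B ∈ Ioo (0:ℝ) (1-A)
      · rw [indicator_of_mem hB, if_pos ⟨hA0, hA1, hB.1, hB.2⟩]
      · rw [indicator_of_notMem hB, if_neg]
        rintro ⟨_, _, hB0, hB1⟩
        exact hB ⟨hB0, hB1⟩
    rw [heq, lintegral_indicator measurableSet_Ioo,
      ← ofReal_integral_eq_lintegral_ofReal]
    · rw [integral_const_mul, LG_integral_B hA0 hA1]
    · apply Integrable.const_mul
      apply (ContinuousOn.integrableOn_Icc (a := (0:ℝ)) (b := 1-A) ?_).mono_set
        Ioo_subset_Icc_self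
      apply ContinuousOn.div continuousOn_const (by fun_prop)
      intro x hx
      rcases hx with ⟨hx0, hx1⟩
      intro h
      linarith
    · filter_upwards [ae_restrict_mem measurableSet_Ioo] with B hB
      have h2AB : (0:ℝ) < 2 - A - B := by rcases hB with ⟨h1, h2⟩; linarith
      have := LG_c_nonneg hA1
      positivity
  · rw [if_neg hA]
    have heq : ∀ B : ℝ, (if 0 < A ∧ A < 1 ∧ 0 < B ∧ B < 1 - A then
          ENNReal.ofReal ((6 / Real.pi ^ 2) / (1 - A) * (1/(2 - A - B))) else 0) = 0 := by
      intro B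
      rw [if_neg]
      rintro ⟨h1, h2, _⟩
      exact hA ⟨h1, h2⟩
    rw [lintegral_congr heq, lintegral_zero]

lemma LG_integrable_A : IntegrableOn
    (fun A : ℝ => (6 / Real.pi ^ 2) / (1 - A) * Real.log (2 - A)) (Ioo (0:ℝ) 1) := by
  have hfin : volume (Ioo (0:ℝ) 1) ≠ ⊤ := by
    rw [Real.volume_Ioo]; exact ENNReal.ofReal_ne_top
  have hmble : AEStronglyMeasurable
      (fun A : ℝ => (6 / Real.pi ^ 2) / (1 - A) * Real.log (2 - A)) volume :=
    Measurable.aestronglyMeasurable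
      ((measurable_const.div (measurable_const.sub measurable_id)).mul
        (Real.measurable_log.comp (measurable_const.sub measurable_id)))
  apply Measure.integrableOn_of_bounded hfin hmble (M := 6 / Real.pi ^ 2)
  filter_upwards [ae_restrict_mem measurableSet_Ioo] with A hA
  obtain ⟨hA0, hA1⟩ := hA
  have h1A : (0:ℝ) < 1 - A := by linarith
  have hπ : (0:ℝ) < 6 / Real.pi ^ 2 := by
    have := Real.pi_ne_zero; positivity
  have hlog0 : 0 ≤ Real.log (2 - A) := Real.log_nonneg (by linarith)
  have hlog1 : Real.log (2 - A) ≤ 1 - A := by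
    have := Real.log_le_sub_one_of_pos (x := 2 - A) (by linarith)
    linarith
  rw [Real.norm_eq_abs, abs_of_nonneg (by positivity)]
  have hx : Real.log (2 - A) / (1 - A) ≤ 1 := by
    rw [div_le_one h1A]; exact hlog1
  have heqq : 6 / Real.pi ^ 2 / (1 - A) * Real.log (2 - A)
      = (6 / Real.pi ^ 2) * (Real.log (2 - A) / (1 - A)) := by ring
  rw [heqq]
  nlinarith [div_nonneg hlog0 h1A.le]

lemma LG_integral_A :
    ∫ A in Ioo (0:ℝ) 1, (6 / Real.pi ^ 2) / (1 - A) * Real.log (2 - A) = 1/2 := by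
  have heq : ∀ A ∈ Ioo (0:ℝ) 1, (6 / Real.pi ^ 2) / (1 - A) * Real.log (2 - A)
      = (6 / Real.pi ^ 2) * (Real.log (1 + (1 - A)) / (1 - A)) := by
    intro A hA
    have h1 : (2:ℝ) - A = 1 + (1 - A) := by ring
    rw [h1]
    ring
  rw [setIntegral_congr_fun measurableSet_Ioo heq]
  have hsub : ∫ A in Ioo (0:ℝ) 1, Real.log (1 + (1 - A)) / (1 - A)
      = ∫ u in Ioo (0:ℝ) 1, Real.log (1 + u) / u := by
    rw [← integral_Ioc_eq_integral_Ioo, ← intervalIntegral.integral_of_le zero_le_one]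
    rw [intervalIntegral.integral_comp_sub_left (fun u => Real.log (1 + u) / u) 1]
    norm_num
    rw [intervalIntegral.integral_of_le zero_le_one, integral_Ioc_eq_integral_Ioo]
  rw [integral_const_mul, hsub, LG_integral_log_div]
  have h1 := Real.pi_ne_zero
  field_simp
  ring

lemma LG_lintegral_density :
    ∫⁻ p : ℝ × ℝ × ℝ, ENNReal.ofReal (lorentzDensity p) = ENNReal.ofReal (1/2) := by
  rw [MeasureTheory.Measure.volume_eq_prod, lintegral_prod _ LG_measurable_density.aemeasurable]
  have hinner : ∀ A : ℝ, ∫⁻ y : ℝ × ℝ, ENNReal.ofReal (lorentzDensity (A, y))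
      = if 0 < A ∧ A < 1 then
          ENNReal.ofReal ((6 / Real.pi ^ 2) / (1 - A) * Real.log (2 - A)) else 0 := by
    intro A
    have hm : AEMeasurable (fun y : ℝ × ℝ => ENNReal.ofReal (lorentzDensity (A, y)))
        ((volume : Measure ℝ).prod volume) :=
      (LG_measurable_density.comp measurable_prodMk_left).aemeasurable
    rw [MeasureTheory.Measure.volume_eq_prod, lintegral_prod _ hm]
    calc ∫⁻ B, ∫⁻ Q, ENNReal.ofReal (lorentzDensity (A, B, Q))
        = ∫⁻ B, (if 0 < A ∧ A < 1 ∧ 0 < B ∧ B < 1 - A then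
            ENNReal.ofReal ((6 / Real.pi ^ 2) / (1 - A) * (1/(2 - A - B))) else 0) := by
          apply lintegral_congr
          intro B
          exact LG_lintegral_Q A B
      _ = _ := LG_lintegral_B A
  calc ∫⁻ A, ∫⁻ y : ℝ × ℝ, ENNReal.ofReal (lorentzDensity (A, y))
      = ∫⁻ A, (if 0 < A ∧ A < 1 then
          ENNReal.ofReal ((6 / Real.pi ^ 2) / (1 - A) * Real.log (2 - A)) else 0) :=
        lintegral_congr hinner
    _ = ∫⁻ A in Ioo (0:ℝ) 1,
          ENNReal.ofReal ((6 / Real.pi ^ 2) / (1 - A) * Real.log (2 - A)) := by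
        rw [← lintegral_indicator measurableSet_Ioo]
        apply lintegral_congr
        intro A
        by_cases hA : A ∈ Ioo (0:ℝ) 1
        · rw [indicator_of_mem hA, if_pos ⟨hA.1, hA.2⟩]
        · rw [indicator_of_notMem hA, if_neg (fun ⟨h1, h2⟩ => hA ⟨h1, h2⟩)]
    _ = ENNReal.ofReal (1/2) := by
        rw [← ofReal_integral_eq_lintegral_ofReal LG_integrable_A, LG_integral_A]
        filter_upwards [ae_restrict_mem measurableSet_Ioo] with A hA
        have h1A : (0:ℝ) < 1 - A := by rcases hA with ⟨h1, h2⟩; linarith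
        have hπ := Real.pi_ne_zero
        have hlog : 0 ≤ Real.log (2 - A) := Real.log_nonneg (by rcases hA with ⟨h1,h2⟩; linarith)
        positivity

lemma LG_lorentzMu_eq : lorentzMu
    = ((volume : Measure (ℝ × ℝ × ℝ)).withDensity fun p =>
        ENNReal.ofReal (lorentzDensity p)).prod (Measure.count : Measure Bool) := rfl

lemma LG_mu_univ : lorentzMu Set.univ = 1 := by
  rw [LG_lorentzMu_eq, ← Set.univ_prod_univ, Measure.prod_prod,
    withDensity_apply _ MeasurableSet.univ, Measure.restrict_univ, LG_lintegral_density,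
    Measure.count_univ]
  have h2 : (ENat.card Bool : ℝ≥0∞) = ENNReal.ofReal 2 := by
    simp [ENNReal.ofReal_ofNat]
  rw [h2, ← ENNReal.ofReal_mul (by norm_num)]
  norm_num

lemma LG_measurable_T (h' : ℝ) :
    Measurable (fun p : (ℝ×ℝ×ℝ)×Bool =>
      transferMap p.1.1 p.1.2.1 p.1.2.2 p.2.toNat h') := by
  have h1 : Measurable (fun p : (ℝ×ℝ×ℝ)×Bool => (-1:ℝ)^p.2.toNat * h') := by
    have : Measurable (fun b : Bool => (-1:ℝ)^b.toNat) := measurable_from_top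
    exact (this.comp measurable_snd).mul_const _
  have hsgn : Measurable (fun p : (ℝ×ℝ×ℝ)×Bool => (-1:ℝ)^p.2.toNat) := by
    have : Measurable (fun b : Bool => (-1:ℝ)^b.toNat) := measurable_from_top
    exact this.comp measurable_snd
  unfold transferMap
  apply Measurable.ite
  · exact measurableSet_lt (by fun_prop) h1
  · exact Measurable.prodMk (by fun_prop)
      (measurable_const.sub ((hsgn.const_mul 2).mul (by fun_prop)))
  apply Measurable.ite
  · exact measurableSet_lt h1 (by fun_prop)
  · exact Measurable.prodMk (by fun_prop)
      (measurable_const.add ((hsgn.const_mul 2).mul (by fun_prop)))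
  · exact Measurable.prodMk (by fun_prop)
      (measurable_const.add ((hsgn.const_mul 2).mul (by fun_prop)))

lemma LG_flip_pointwise (A B Q : ℝ) (b : Bool) (h' : ℝ) :
    transferMap A B Q (!b).toNat (-h')
      = ((transferMap A B Q b.toNat h').1, -(transferMap A B Q b.toNat h').2) := by
  cases b <;>
    simp only [transferMap, Bool.not_true, Bool.not_false, Bool.toNat_true, Bool.toNat_false,
      pow_zero, pow_one, one_mul, neg_one_mul, neg_neg, neg_lt, neg_sub] <;>
    split_ifs <;> simp <;> ring_nf

lemma LG_mapsTo {h' : ℝ} (hh' : h' ∈ Set.Ioo (-1:ℝ) 1) {A B Q : ℝ} (b : Bool)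
    (hG : 0 < A ∧ A < 1 ∧ 0 < B ∧ B < 1 - A ∧ 0 < Q ∧ Q < 1/(2 - A - B)) :
    0 < (transferMap A B Q b.toNat h').1 ∧
      (transferMap A B Q b.toNat h').2 ∈ Set.Icc (-1:ℝ) 1 := by
  obtain ⟨hA0, hA1, hB0, hB1, hQ0, hQr⟩ := hG
  obtain ⟨hm1, hp1⟩ := hh'
  have h2AB : (0:ℝ) < 2 - A - B := by linarith
  have hQ1 : Q * (2 - A - B) < 1 := by
    rw [lt_div_iff₀ h2AB] at hQr; exact hQr
  have hnum : 0 < 1 - Q*(1 - B) := by nlinarith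
  have h1A : (0:ℝ) < 1 - A := by linarith
  have hQ' : 0 < (1 - Q*(1 - B))/(1 - A) := div_pos hnum h1A
  cases b <;>
    simp only [transferMap, Bool.toNat_true, Bool.toNat_false, pow_zero, pow_one,
      one_mul, neg_one_mul, gt_iff_lt, Set.mem_Icc] <;>
    split_ifs with h1 h2 <;>
    dsimp only <;>
    constructor <;>
    first
      | exact hQ0
      | exact hQ'
      | positivity
      | linarith
      | (constructor <;> linarith)
      | (refine ⟨?_, ?_⟩ <;> linarith)

end LGAux

/-- For every `h' ∈ (−1,1)`, `P(·,·|h')` is a probability measure concentrated on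
`ℝ₊ × [−1,1]`, and `P(·,·|−h')` is the image of `P(·,·|h')` under `(s,h) ↦ (s,−h)`. -/
theorem transitionProb_isProbability_and_symm (h' : ℝ) (hh' : h' ∈ Set.Ioo (-1:ℝ) 1) :
    IsProbabilityMeasure (transitionProb h') ∧
    transitionProb h' {p : ℝ × ℝ | ¬ (0 < p.1 ∧ p.2 ∈ Set.Icc (-1:ℝ) 1)} = 0 ∧
    transitionProb (-h') = (transitionProb h').map (fun q : ℝ × ℝ => (q.1, -q.2)) := by
  have hbad : MeasurableSet {p : ℝ × ℝ | ¬ (0 < p.1 ∧ p.2 ∈ Set.Icc (-1:ℝ) 1)} := by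
    have hgood : MeasurableSet {p : ℝ × ℝ | 0 < p.1 ∧ p.2 ∈ Set.Icc (-1:ℝ) 1} := by
      simp only [Set.setOf_and]
      exact (measurableSet_lt measurable_const measurable_fst).inter
        (measurable_snd measurableSet_Icc)
    exact hgood.compl
  refine ⟨?_, ?_, ?_⟩
  · constructor
    rw [transitionProb, Measure.map_apply (LG_measurable_T h') MeasurableSet.univ,
      Set.preimage_univ, LG_mu_univ]
  · rw [transitionProb, Measure.map_apply (LG_measurable_T h') hbad]
    apply le_antisymm _ zero_le
    have hsub : (fun p : (ℝ×ℝ×ℝ)×Bool => transferMap p.1.1 p.1.2.1 p.1.2.2 p.2.toNat h')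
        ⁻¹' {p : ℝ × ℝ | ¬ (0 < p.1 ∧ p.2 ∈ Set.Icc (-1:ℝ) 1)}
        ⊆ ({p : ℝ × ℝ × ℝ | 0 < p.1 ∧ p.1 < 1 ∧ 0 < p.2.1 ∧ p.2.1 < 1 - p.1 ∧
            0 < p.2.2 ∧ p.2.2 < 1/(2 - p.1 - p.2.1)}ᶜ ×ˢ (Set.univ : Set Bool)) := by
      intro p hp
      rw [Set.mem_prod]
      refine ⟨fun hG => ?_, Set.mem_univ _⟩
      exact hp (LG_mapsTo hh' p.2 hG)
    refine le_trans (measure_mono hsub) ?_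
    rw [LG_lorentzMu_eq, Measure.prod_prod, withDensity_apply _ LG_measurableSet_cond.compl]
    have hzero : ∫⁻ p in {p : ℝ × ℝ × ℝ | 0 < p.1 ∧ p.1 < 1 ∧ 0 < p.2.1 ∧
        p.2.1 < 1 - p.1 ∧ 0 < p.2.2 ∧ p.2.2 < 1/(2 - p.1 - p.2.1)}ᶜ,
        ENNReal.ofReal (lorentzDensity p) = 0 := by
      have hae : ∀ᵐ p : ℝ × ℝ × ℝ ∂volume, p ∈ ({p : ℝ × ℝ × ℝ | 0 < p.1 ∧ p.1 < 1 ∧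
          0 < p.2.1 ∧ p.2.1 < 1 - p.1 ∧ 0 < p.2.2 ∧ p.2.2 < 1/(2 - p.1 - p.2.1)}ᶜ) →
          ENNReal.ofReal (lorentzDensity p) = (fun _ => (0:ℝ≥0∞)) p := by
        apply ae_of_all
        intro p hp
        simp only [Set.mem_compl_iff, Set.mem_setOf_eq] at hp
        unfold lorentzDensity
        rw [if_neg hp, ENNReal.ofReal_zero]
      rw [setLIntegral_congr_fun_ae LG_measurableSet_cond.compl hae, lintegral_zero]
    rw [hzero, zero_mul]
  · have hflip : Measurable (fun x : (ℝ×ℝ×ℝ)×Bool => (x.1, !x.2)) :=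
      Measurable.prodMk measurable_fst
        ((measurable_from_top (f := fun b : Bool => !b)).comp measurable_snd)
    have hneg : Measurable (fun q : ℝ × ℝ => (q.1, -q.2)) :=
      Measurable.prodMk measurable_fst measurable_snd.neg
    have hflipmap : lorentzMu.map (fun x : (ℝ×ℝ×ℝ)×Bool => (x.1, !x.2)) = lorentzMu := by
      rw [LG_lorentzMu_eq]
      have h1 : (fun x : (ℝ×ℝ×ℝ)×Bool => (x.1, !x.2))
          = Prod.map (id : ℝ×ℝ×ℝ → ℝ×ℝ×ℝ) (fun b : Bool => !b) := rfl
      have hcount : (Measure.count : Measure Bool).map (fun b => !b) = Measure.count := by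
        ext s hs
        rw [Measure.map_apply (measurable_from_top) hs]
        have himg : (fun b : Bool => !b) ⁻¹' s = (fun b : Bool => !b) '' s := by
          ext x; cases x <;> simp
        rw [himg, Measure.count_injective_image (fun a b hab => by simpa using hab)]
      rw [h1, ← Measure.map_prod_map _ _ measurable_id measurable_from_top,
        Measure.map_id, hcount]
    calc transitionProb (-h')
        = (lorentzMu.map (fun x : (ℝ×ℝ×ℝ)×Bool => (x.1, !x.2))).map
            (fun p : (ℝ×ℝ×ℝ)×Bool => transferMap p.1.1 p.1.2.1 p.1.2.2 p.2.toNat (-h')) := by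
          rw [hflipmap, transitionProb]
      _ = lorentzMu.map ((fun p : (ℝ×ℝ×ℝ)×Bool =>
            transferMap p.1.1 p.1.2.1 p.1.2.2 p.2.toNat (-h'))
            ∘ (fun x : (ℝ×ℝ×ℝ)×Bool => (x.1, !x.2))) := by
          rw [Measure.map_map (LG_measurable_T (-h')) hflip]
      _ = lorentzMu.map ((fun q : ℝ × ℝ => (q.1, -q.2))
            ∘ (fun p : (ℝ×ℝ×ℝ)×Bool => transferMap p.1.1 p.1.2.1 p.1.2.2 p.2.toNat h')) := by
          congr 1
          funext p
          simp only [Function.comp_apply]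
          exact LG_flip_pointwise p.1.1 p.1.2.1 p.1.2.2 p.2 h'
      _ = (transitionProb h').map (fun q : ℝ × ℝ => (q.1, -q.2)) := by
          rw [transitionProb, Measure.map_map hneg (LG_measurable_T h')]
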